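/- Let σ be an admissible measure on ℝ^d (symmetric probability measure with compact support, 0 ∉ supp σ). Define I_σ(A) = ∬ A(x) A(x+y) dσ(y) dx, identifying A with its indicator. If Z_δ(3/4)A is not σ-avoiding (i.e., there exist x₀, y₀ ∈ Z_δ(3/4)A with x₀ − y₀ ∈ supp σ), then I_σ(A) ≥ (δ^d/4)·σ(Q(y₀−x₀, δ/(8d))) > 0. -/

import Mathlib

open MeasureTheory Set

noncomputable section

/-- Open axis-parallel cube of side length r centered at x in ℝ^d. -/
def cube (d : ℕ) (x : EuclideanSpace ℝ (Fin d)) (r : ℝ) :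
    Set (EuclideanSpace ℝ (Fin d)) :=
  {y | ∀ i, |y i - x i| < r / 2}

lemma isOpen_cube (c : EuclideanSpace ℝ (Fin d)) (r : ℝ) : IsOpen (cube d c r) := by
  have : cube d c r = ⋂ i, (fun y : EuclideanSpace ℝ (Fin d) => y i) ⁻¹' {t | |t - c i| < r / 2} := by
    ext y; simp [cube]
  rw [this]
  exact isOpen_iInter_of_finite fun i =>
    (isOpen_lt (by fun_prop) continuous_const).preimage (EuclideanSpace.proj (𝕜 := ℝ) i).continuous

lemma measurableSet_cube (c : EuclideanSpace ℝ (Fin d)) (r : ℝ) : MeasurableSet (cube d c r) :=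
  (isOpen_cube c r).measurableSet

lemma cube_preimage_equiv (c : EuclideanSpace ℝ (Fin d)) (r : ℝ) :
    cube d c r = (MeasurableEquiv.toLp 2 (Fin d → ℝ)).symm ⁻¹'
      (Set.univ.pi fun i => Ioo (c i - r / 2) (c i + r / 2)) := by
  ext y
  simp [cube, MeasurableEquiv.coe_toLp_symm, Set.mem_pi, abs_sub_lt_iff]
  constructor
  · intro h i; constructor <;> linarith [(h i).1, (h i).2]
  · intro h i; constructor <;> linarith [(h i).1, (h i).2]

lemma volume_cube (c : EuclideanSpace ℝ (Fin d)) {r : ℝ} (hr : 0 ≤ r) :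
    volume (cube d c r) = ENNReal.ofReal (r ^ d) := by
  rw [cube_preimage_equiv, (EuclideanSpace.volume_preserving_symm_measurableEquiv_toLp (Fin d)).measure_preimage
      (MeasurableSet.univ_pi fun i => measurableSet_Ioo).nullMeasurableSet]
  rw [volume_pi_pi]
  have : ∀ i : Fin d, volume (Ioo (c i - r / 2) (c i + r / 2)) = ENNReal.ofReal r := by
    intro i; rw [Real.volume_Ioo]; congr 1; ring
  simp only [this, Finset.prod_const, Finset.card_univ, Fintype.card_fin,
    ← ENNReal.ofReal_pow hr]


section core
variable {d : ℕ}

lemma core (A : Set (EuclideanSpace ℝ (Fin d))) (hA : MeasurableSet A)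
    {δ : ℝ} (hδ : 0 < δ) (hd : 0 < d) {x₀ y₀ z : EuclideanSpace ℝ (Fin d)}
    (hx₀ : ENNReal.ofReal (3 / 4 * δ ^ d) < volume (cube d x₀ δ ∩ A))
    (hy₀ : ENNReal.ofReal (3 / 4 * δ ^ d) < volume (cube d y₀ δ ∩ A))
    (hz : z ∈ cube d 0 (δ / (8 * d))) :
    ENNReal.ofReal (δ ^ d / 4) ≤
      volume {x | x ∈ A ∧ x + (y₀ - x₀ + z) ∈ A} := by
  have hdR : (0:ℝ) < d := Nat.cast_pos.mpr hd
  have hdne : (d:ℝ) ≠ 0 := hdR.ne'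
  have hd1 : (1:ℝ) ≤ d := Nat.one_le_cast.mpr hd
  set C := cube d (0 : EuclideanSpace ℝ (Fin d)) δ with hC
  set B₁ : Set (EuclideanSpace ℝ (Fin d)) := {u | u + x₀ ∈ A} with hB₁def
  set B₂ : Set (EuclideanSpace ℝ (Fin d)) := {u | u + (y₀ + z) ∈ A} with hB₂def
  set B₃ : Set (EuclideanSpace ℝ (Fin d)) := {u | u + y₀ ∈ A} with hB₃def
  have hCvol : volume C = ENNReal.ofReal (δ ^ d) := volume_cube _ hδ.le
  -- translation identities
  have htrans1 : volume (B₁ ∩ C) = volume (cube d x₀ δ ∩ A) := by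
    have : (fun u => u + x₀) ⁻¹' (cube d x₀ δ ∩ A) = B₁ ∩ C := by
      ext u
      simp only [Set.mem_preimage, Set.mem_inter_iff, Set.mem_setOf_eq, cube, hB₁def, hC]
      constructor
      · rintro ⟨h1, h2⟩
        refine ⟨h2, fun i => ?_⟩
        have := h1 i; simpa using this
      · rintro ⟨h2, h1⟩
        refine ⟨fun i => ?_, h2⟩
        have := h1 i; simpa using this
    rw [← this, measure_preimage_add_right]
  have htrans3 : volume (B₃ ∩ C) = volume (cube d y₀ δ ∩ A) := by
    have : (fun u => u + y₀) ⁻¹' (cube d y₀ δ ∩ A) = B₃ ∩ C := by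
      ext u
      simp only [Set.mem_preimage, Set.mem_inter_iff, Set.mem_setOf_eq, cube, hB₃def, hC]
      constructor
      · rintro ⟨h1, h2⟩
        refine ⟨h2, fun i => ?_⟩
        have := h1 i; simpa using this
      · rintro ⟨h2, h1⟩
        refine ⟨fun i => ?_, h2⟩
        have := h1 i; simpa using this
    rw [← this, measure_preimage_add_right]
  have htrans2 : volume (B₂ ∩ C) = volume (B₃ ∩ cube d z δ) := by
    have : (fun v => v + (-z)) ⁻¹' (B₂ ∩ C) = B₃ ∩ cube d z δ := by
      ext v
      simp only [Set.mem_preimage, Set.mem_inter_iff, Set.mem_setOf_eq, cube, hB₂def, hB₃def, hC]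
      constructor
      · rintro ⟨h1, h2⟩
        constructor
        · have : v + -z + (y₀ + z) = v + y₀ := by abel
          rwa [this] at h1
        · intro i; have := h2 i; simpa [sub_eq_add_neg] using this
      · rintro ⟨h1, h2⟩
        constructor
        · have : v + -z + (y₀ + z) = v + y₀ := by abel
          rwa [this]
        · intro i; have := h2 i; simpa [sub_eq_add_neg] using this
    rw [← this, measure_preimage_add_right]
  -- small cube inclusion
  have hzsmall : ∀ i, |z i| < δ / (16 * d) := by
    intro i
    have := hz i
    simp only [cube] at this ⊢
    have h0i : (0 : EuclideanSpace ℝ (Fin d)) i = 0 := rfl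
    rw [h0i, sub_zero] at this
    have e : δ / (8*(d:ℝ)) / 2 = δ / (16*(d:ℝ)) := by rw [div_div]; congr 1; ring
    linarith [this, e]
  have hincl : cube d z (δ - δ / (8 * d)) ⊆ C ∩ cube d z δ := by
    intro y hy
    have h8 : 0 < δ / (8 * d) := by positivity
    constructor
    · intro i
      have h1 := hy i
      have h2 := hzsmall i
      have h0i : (0 : EuclideanSpace ℝ (Fin d)) i = 0 := rfl
      rw [h0i, sub_zero]
      have : |y i| ≤ |y i - z i| + |z i| := by
        calc |y i| = |(y i - z i) + z i| := by ring_nf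
        _ ≤ |y i - z i| + |z i| := abs_add_le _ _
      have e : δ / (8*d) = 2 * (δ / (16*d)) := by field_simp; ring
      calc |y i| ≤ |y i - z i| + |z i| := this
        _ < (δ - δ/(8*d))/2 + δ/(16*d) := by linarith
        _ = δ / 2 := by field_simp; ring
    · intro i
      have h1 := hy i
      have : (δ - δ/(8*d))/2 ≤ δ/2 := by linarith [h8]
      linarith
  have hsmallvol : ENNReal.ofReal (7 / 8 * δ ^ d) ≤ volume (C ∩ cube d z δ) := by
    have hpos : (0:ℝ) ≤ δ - δ / (8 * d) := by
      have : δ / (8 * d) ≤ δ := by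
        rw [div_le_iff₀ (by positivity)]
        nlinarith [hδ, hd1]
      linarith
    have := measure_mono (μ := (volume : Measure (EuclideanSpace ℝ (Fin d)))) hincl
    rw [volume_cube _ hpos] at this
    refine le_trans (ENNReal.ofReal_le_ofReal ?_) this
    have key : (7:ℝ)/8 ≤ (1 - 1/(8*d)) ^ d := by
      have := one_add_mul_le_pow (a := -(1/(8*(d:ℝ)))) (by
        have h18 : 1/(8*(d:ℝ)) ≤ 1 := by
          rw [div_le_one (by positivity)]; linarith
        linarith) d
      have e : (1 + -(1/(8*(d:ℝ)))) = 1 - 1/(8*d) := by ring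
      rw [e] at this
      have e2 : 1 + (d:ℝ) * -(1/(8*d)) = 7/8 := by field_simp; ring
      linarith [e2 ▸ this]
    have e3 : δ - δ/(8*d) = δ * (1 - 1/(8*d)) := by field_simp
    rw [e3, mul_pow]
    nlinarith [pow_pos hδ d, key]
  have hB2meas : MeasurableSet (B₂ ∩ C) :=
    (hA.preimage (measurable_add_const _)).inter (measurableSet_cube _ _)
  have hCfin : volume C ≠ ⊤ := by rw [hCvol]; exact ENNReal.ofReal_ne_top
  -- |C \ cube z δ| ≤ δ^d/8
  have hdiffC : volume (C \ cube d z δ) ≤ ENNReal.ofReal (δ ^ d / 8) := by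
    have heq : volume (C ∩ cube d z δ) + volume (C \ cube d z δ) = volume C :=
      measure_inter_add_diff C (measurableSet_cube _ _)
    have h1 : ENNReal.ofReal (7/8 * δ^d) + volume (C \ cube d z δ) ≤
        ENNReal.ofReal (7/8 * δ^d) + ENNReal.ofReal (δ^d/8) := by
      calc ENNReal.ofReal (7/8 * δ^d) + volume (C \ cube d z δ)
          ≤ volume (C ∩ cube d z δ) + volume (C \ cube d z δ) := by
            exact add_le_add_left hsmallvol _
        _ = volume C := heq
        _ = ENNReal.ofReal (7/8 * δ^d) + ENNReal.ofReal (δ^d/8) := by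
            rw [hCvol, ← ENNReal.ofReal_add (by positivity) (by positivity)]
            congr 1; ring
    exact (ENNReal.add_le_add_iff_left ENNReal.ofReal_ne_top).mp h1
  -- lower bound for B₂ ∩ C
  have hB2low : ENNReal.ofReal (3/4 * δ^d) ≤ volume (B₂ ∩ C) + ENNReal.ofReal (δ^d/8) := by
    have hsub : B₃ ∩ C ⊆ (B₃ ∩ cube d z δ) ∪ (C \ cube d z δ) := by
      rintro u ⟨h1, h2⟩
      by_cases h : u ∈ cube d z δ
      · exact Or.inl ⟨h1, h⟩
      · exact Or.inr ⟨h2, h⟩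
    calc ENNReal.ofReal (3/4 * δ^d) ≤ volume (B₃ ∩ C) := by rw [htrans3]; exact hy₀.le
      _ ≤ volume (B₃ ∩ cube d z δ) + volume (C \ cube d z δ) :=
        le_trans (measure_mono hsub) (measure_union_le _ _)
      _ ≤ volume (B₂ ∩ C) + ENNReal.ofReal (δ^d/8) := by
        rw [← htrans2]; exact add_le_add_right hdiffC _
  -- inclusion-exclusion
  have hie : volume (B₁ ∩ C) + volume (B₂ ∩ C) ≤
      volume C + volume ((B₁ ∩ C) ∩ (B₂ ∩ C)) := by
    have := measure_union_add_inter (μ := volume) (B₁ ∩ C) hB2meas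
    rw [← this]
    have : (B₁ ∩ C) ∪ (B₂ ∩ C) ⊆ C := by
      rintro u (⟨_, h⟩ | ⟨_, h⟩) <;> exact h
    exact add_le_add_left (measure_mono this) _
  have hinter : ENNReal.ofReal (δ^d/4) ≤ volume ((B₁ ∩ C) ∩ (B₂ ∩ C)) := by
    have hchain : ENNReal.ofReal (3/2 * δ^d) ≤
        ENNReal.ofReal (9/8 * δ^d) + volume ((B₁ ∩ C) ∩ (B₂ ∩ C)) := by
      calc ENNReal.ofReal (3/2 * δ^d)
          = ENNReal.ofReal (3/4 * δ^d) + ENNReal.ofReal (3/4 * δ^d) := by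
            rw [← ENNReal.ofReal_add (by positivity) (by positivity)]; congr 1; ring
        _ ≤ volume (B₁ ∩ C) + (volume (B₂ ∩ C) + ENNReal.ofReal (δ^d/8)) := by
            refine add_le_add ?_ hB2low
            rw [htrans1]; exact hx₀.le
        _ = (volume (B₁ ∩ C) + volume (B₂ ∩ C)) + ENNReal.ofReal (δ^d/8) := by ring
        _ ≤ (volume C + volume ((B₁ ∩ C) ∩ (B₂ ∩ C))) + ENNReal.ofReal (δ^d/8) :=
            add_le_add_left hie _
        _ = ENNReal.ofReal (9/8 * δ^d) + volume ((B₁ ∩ C) ∩ (B₂ ∩ C)) := by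
            rw [hCvol, add_right_comm]
            congr 1
            rw [← ENNReal.ofReal_add (by positivity) (by positivity)]
            congr 1; ring
    have := tsub_le_iff_left.mpr hchain
    rw [← ENNReal.ofReal_sub _ (by positivity)] at this
    refine le_trans (ENNReal.ofReal_le_ofReal ?_) this
    nlinarith [pow_pos hδ d]
  -- transfer to the target set
  have hfinal : volume ((B₁ ∩ C) ∩ (B₂ ∩ C)) ≤
      volume {x | x ∈ A ∧ x + (y₀ - x₀ + z) ∈ A} := by
    have hpre : (fun u => u + x₀) ⁻¹' {x | x ∈ A ∧ x + (y₀ - x₀ + z) ∈ A} = B₁ ∩ B₂ := by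
      ext u
      simp only [Set.mem_preimage, Set.mem_setOf_eq, Set.mem_inter_iff, hB₁def, hB₂def]
      have : u + x₀ + (y₀ - x₀ + z) = u + (y₀ + z) := by abel
      rw [this]
    calc volume ((B₁ ∩ C) ∩ (B₂ ∩ C)) ≤ volume (B₁ ∩ B₂) := by
          refine measure_mono ?_
          rintro u ⟨⟨h1, _⟩, ⟨h2, _⟩⟩; exact ⟨h1, h2⟩
      _ = volume ((fun u => u + x₀) ⁻¹' {x | x ∈ A ∧ x + (y₀ - x₀ + z) ∈ A}) := by rw [hpre]
      _ = volume {x | x ∈ A ∧ x + (y₀ - x₀ + z) ∈ A} := measure_preimage_add_right _ _ _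
  exact le_trans hinter hfinal

end core

/-- The zooming-out operator: Z_δ(ε)A = {x : |Q(x,δ) ∩ A| > ε·δ^d}. -/
def Zoom (d : ℕ) (δ ε : ℝ) (A : Set (EuclideanSpace ℝ (Fin d))) :
    Set (EuclideanSpace ℝ (Fin d)) :=
  {x | ENNReal.ofReal (ε * δ ^ d) < volume (cube d x δ ∩ A)}

/-- Support of a measure. -/
def msupp {d : ℕ} (σ : Measure (EuclideanSpace ℝ (Fin d))) :
    Set (EuclideanSpace ℝ (Fin d)) :=
  {x | ∀ U : Set (EuclideanSpace ℝ (Fin d)), IsOpen U → x ∈ U → σ U ≠ 0}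

/-- The saturation functional I_σ(A) = ∬ A(x)A(x+y) dσ(y) dx. -/
def Isat {d : ℕ} (σ : Measure (EuclideanSpace ℝ (Fin d)))
    (A : Set (EuclideanSpace ℝ (Fin d))) : ENNReal :=
  ∫⁻ x, ∫⁻ y, A.indicator (fun _ => (1 : ENNReal)) x *
    A.indicator (fun _ => (1 : ENNReal)) (x + y) ∂σ

/-- If Z_δ(3/4)A is not σ-avoiding, witnessed by x₀, y₀ ∈ Z_δ(3/4)A with
x₀ − y₀ ∈ supp σ, then I_σ(A) ≥ (δ^d/4)·σ(Q(y₀−x₀, δ/(8d))) > 0, for σ an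
admissible (symmetric probability, compactly supported, 0 ∉ supp σ) measure. -/
theorem stmt13 (d : ℕ) (hd : 0 < d) (σ : Measure (EuclideanSpace ℝ (Fin d)))
    [IsProbabilityMeasure σ]
    (hsymm : σ.map (fun x => -x) = σ)
    (hcpt : IsCompact (msupp σ))
    (h0 : (0 : EuclideanSpace ℝ (Fin d)) ∉ msupp σ)
    (A : Set (EuclideanSpace ℝ (Fin d))) (hA : MeasurableSet A)
    (δ : ℝ) (hδ : 0 < δ)
    (x₀ y₀ : EuclideanSpace ℝ (Fin d))
    (hx₀ : x₀ ∈ Zoom d δ (3 / 4) A) (hy₀ : y₀ ∈ Zoom d δ (3 / 4) A)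
    (hdiff : x₀ - y₀ ∈ msupp σ) :
    ENNReal.ofReal (δ ^ d / 4) * σ (cube d (y₀ - x₀) (δ / (8 * d))) ≤ Isat σ A ∧
      0 < ENNReal.ofReal (δ ^ d / 4) * σ (cube d (y₀ - x₀) (δ / (8 * d))) := by
  have hdR : (0:ℝ) < d := Nat.cast_pos.mpr hd
  set r : ℝ := δ / (8 * d) with hr
  have hrpos : 0 < r := by positivity
  -- support is symmetric
  have hmem : y₀ - x₀ ∈ msupp σ := by
    intro U hU hmemU
    have h1 : σ U = σ ((fun x : EuclideanSpace ℝ (Fin d) => -x) ⁻¹' U) := by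
      conv_lhs => rw [← hsymm]
      exact Measure.map_apply measurable_neg hU.measurableSet
    rw [h1]
    refine hdiff _ (hU.preimage continuous_neg) ?_
    simp only [Set.mem_preimage, neg_sub]
    exact hmemU
  have hσpos : σ (cube d (y₀ - x₀) r) ≠ 0 := by
    refine hmem _ (isOpen_cube _ _) ?_
    intro i
    simp only [sub_self, abs_zero]
    positivity
  constructor
  · -- main inequality
    have hind : Measurable (A.indicator (fun _ => (1 : ENNReal))) :=
      measurable_const.indicator hA
    have hf : Measurable (Function.uncurry fun x y : EuclideanSpace ℝ (Fin d) =>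
        A.indicator (fun _ => (1 : ENNReal)) x * A.indicator (fun _ => (1 : ENNReal)) (x + y)) :=
      (hind.comp measurable_fst).mul (hind.comp (measurable_fst.add measurable_snd))
    have hswap : Isat σ A = ∫⁻ y, ∫⁻ x, A.indicator (fun _ => (1 : ENNReal)) x *
        A.indicator (fun _ => (1 : ENNReal)) (x + y) ∂volume ∂σ := by
      exact lintegral_lintegral_swap hf.aemeasurable
    have hinner : ∀ y, (∫⁻ x, A.indicator (fun _ => (1 : ENNReal)) x *
        A.indicator (fun _ => (1 : ENNReal)) (x + y) ∂volume) =
        volume {x | x ∈ A ∧ x + y ∈ A} := by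
      intro y
      have hps : ∀ x, A.indicator (fun _ => (1 : ENNReal)) x *
          A.indicator (fun _ => (1 : ENNReal)) (x + y) =
          ({x | x ∈ A ∧ x + y ∈ A}).indicator (fun _ => (1 : ENNReal)) x := by
        intro x
        by_cases h1 : x ∈ A <;> by_cases h2 : x + y ∈ A <;>
          simp [Set.indicator_apply, h1, h2]
      simp only [hps]
      rw [lintegral_indicator_const]
      · rw [one_mul]
      · exact hA.inter (hA.preimage (measurable_add_const y))
    have hgb : ∀ y ∈ cube d (y₀ - x₀) r,
        ENNReal.ofReal (δ ^ d / 4) ≤ volume {x | x ∈ A ∧ x + y ∈ A} := by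
      intro y hy
      have hz : y - (y₀ - x₀) ∈ cube d 0 (δ / (8 * d)) := by
        intro i
        have := hy i
        have e : (y - (y₀ - x₀)) i - (0 : EuclideanSpace ℝ (Fin d)) i =
            y i - (y₀ - x₀) i := by
          simp [PiLp.sub_apply]
        rw [e]
        exact this
      have := core A hA hδ hd hx₀ hy₀ hz
      have e2 : y₀ - x₀ + (y - (y₀ - x₀)) = y := by abel
      rwa [e2] at this
    rw [hswap]
    calc ENNReal.ofReal (δ ^ d / 4) * σ (cube d (y₀ - x₀) r)
        = ∫⁻ y, (cube d (y₀ - x₀) r).indicator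
            (fun _ => ENNReal.ofReal (δ ^ d / 4)) y ∂σ := by
          rw [lintegral_indicator_const (measurableSet_cube _ _)]
      _ ≤ ∫⁻ y, volume {x | x ∈ A ∧ x + y ∈ A} ∂σ := by
          refine lintegral_mono fun y => ?_
          by_cases hy : y ∈ cube d (y₀ - x₀) r
          · rw [Set.indicator_of_mem hy]; exact hgb y hy
          · rw [Set.indicator_of_notMem hy]; exact zero_le
      _ = _ := by
          refine lintegral_congr fun y => ?_
          rw [hinner y]
  · exact ENNReal.mul_pos (ENNReal.ofReal_pos.mpr (by positivity)).ne' hσpos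
end
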